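/- Let H be a Hopf algebra over a field k such that the trivial H-module k (via the counit) is projective as an H-module, and assume H is finite-dimensional. Then H is semisimple. -/

import Mathlib

open Coalgebra TensorProduct LinearMap

variable {k H : Type} [Field k] [Ring H] [HopfAlgebra k H]

local notation "S" => HopfAlgebra.antipode (R := k) (A := H)

noncomputable def mk₃ {M : Type} [AddCommGroup M] [Module k M]
    (B : H →ₗ[k] H →ₗ[k] M) (A₁ A₂ A₃ : H →ₗ[k] H) : H →ₗ[k] H →ₗ[k] H →ₗ[k] M :=
  LinearMap.mk₂ k (fun x y => (B (A₁ x)) ∘ₗ (LinearMap.mulLeft k (A₂ y)) ∘ₗ A₃)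
    (fun x x' y => by ext z; simp [add_mul])
    (fun c x y => by ext z; simp)
    (fun x y y' => by ext z; simp [add_mul, mul_add])
    (fun c x y => by ext z; simp [smul_mul_assoc])

@[simp] lemma mk₃_apply {M : Type} [AddCommGroup M] [Module k M]
    (B : H →ₗ[k] H →ₗ[k] M) (A₁ A₂ A₃ : H →ₗ[k] H) (x y z : H) :
    mk₃ B A₁ A₂ A₃ x y z = B (A₁ x) (A₂ y * A₃ z) := rfl

lemma tri {M : Type} [AddCommGroup M] [Module k M] (T : H →ₗ[k] H →ₗ[k] H →ₗ[k] M)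
    {a : H} {ι : Type} {κ Λ' : ι → Type} (r : Repr k a ι) (rL : ∀ i : ι, Repr k (r.left i) (κ i))
    (rR : ∀ i : ι, Repr k (r.right i) (Λ' i)) :
    ∑ i ∈ r.index, ∑ j ∈ (rL i).index,
      T ((rL i).left j) ((rL i).right j) (r.right i)
    = ∑ i ∈ r.index, ∑ j ∈ (rR i).index,
      T (r.left i) ((rR i).left j) ((rR i).right j) := by
  have h := sum_tmul_tmul_eq r rL rR
  apply_fun TensorProduct.lift ((TensorProduct.uncurry (RingHom.id k) H H M) ∘ₗ T) at h
  simpa [map_sum] using h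

noncomputable def mulRepr {a b : H} {ι κ : Type} (ra : Repr k a ι) (rb : Repr k b κ) :
    Repr k (a * b) (ι × κ) where
  index := ra.index ×ˢ rb.index
  left := fun p => ra.left p.1 * rb.left p.2
  right := fun p => ra.right p.1 * rb.right p.2
  eq := by
    rw [Finset.sum_product]
    rw [show CoalgebraStruct.comul (R := k) (a * b) = comul a * comul b from
      Bialgebra.comul_mul a b, ← ra.eq, ← rb.eq, Finset.sum_mul_sum]
    simp [Algebra.TensorProduct.tmul_mul_tmul]

lemma repr_sum {M : Type} [AddCommGroup M] [Module k M] {c : H} (F : H →ₗ[k] H →ₗ[k] M)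
    {ι : Type} (r : Repr k c ι) :
    ∑ i ∈ r.index, F (r.left i) (r.right i) = TensorProduct.lift F (comul c) := by
  rw [← r.eq]; simp [map_sum]

lemma repr_smul_left {a : H} {ι : Type} (r : Repr k a ι) :
    ∑ i ∈ r.index, counit (R := k) (r.right i) • r.left i = a := by
  have h := sum_tmul_counit_eq r
  apply_fun (TensorProduct.rid k H) at h
  simp only [map_sum, TensorProduct.rid_tmul, one_smul] at h
  exact h

lemma repr_smul_right {a : H} {ι : Type} (r : Repr k a ι) :
    ∑ i ∈ r.index, counit (R := k) (r.left i) • r.right i = a := by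
  have h := sum_counit_tmul_eq r
  apply_fun (TensorProduct.lid k H) at h
  simp only [map_sum, TensorProduct.lid_tmul, one_smul] at h
  exact h

lemma mul_algebraMap_eq_smul (t : k) (x : H) : x * algebraMap k H t = t • x := by
  rw [← Algebra.commutes, ← Algebra.smul_def]

lemma inner1 {x y : H} {ι κ : Type} (rx : Repr k x ι) (ry : Repr k y κ) (C : H) :
    ∑ u ∈ rx.index, ∑ v ∈ ry.index,
      C * ((rx.left u * ry.left v) * S (rx.right u * ry.right v))
    = (counit (R := k) x * counit (R := k) y) • C := by
  simp only [← Finset.mul_sum]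
  have h1 : ∑ u ∈ rx.index, ∑ v ∈ ry.index,
      (rx.left u * ry.left v) * S (rx.right u * ry.right v)
      = ∑ p ∈ (mulRepr rx ry).index,
        (mulRepr rx ry).left p * S ((mulRepr rx ry).right p) :=
    (Finset.sum_product rx.index ry.index
      (fun p => (mulRepr rx ry).left p * S ((mulRepr rx ry).right p))).symm
  rw [h1, HopfAlgebra.sum_mul_antipode_eq_algebraMap_counit (mulRepr rx ry)]
  rw [show counit (R := k) (x * y) = counit (R := k) x * counit (R := k) y from
    Bialgebra.counit_mul x y]
  rw [mul_algebraMap_eq_smul]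

lemma sum_antipode_mul_mul {x : H} {ι : Type} (rx : Repr k x ι) (C : H) :
    ∑ u ∈ rx.index, S (rx.left u) * (rx.right u * C) = counit (R := k) x • C := by
  calc ∑ u ∈ rx.index, S (rx.left u) * (rx.right u * C)
      = (∑ u ∈ rx.index, S (rx.left u) * rx.right u) * C := by
        rw [Finset.sum_mul]; simp [mul_assoc]
    _ = counit (R := k) x • C := by
        rw [HopfAlgebra.sum_antipode_mul_eq_algebraMap_counit rx, ← Algebra.smul_def]

lemma inner3 {x y : H} {ι κ : Type} (rx : Repr k x ι) (ry : Repr k y κ) (D : H) :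
    ∑ u ∈ rx.index, ∑ v ∈ ry.index,
      (S (ry.left v) * S (rx.left u)) * ((rx.right u * ry.right v) * D)
    = (counit (R := k) x * counit (R := k) y) • D := by
  calc ∑ u ∈ rx.index, ∑ v ∈ ry.index,
        (S (ry.left v) * S (rx.left u)) * ((rx.right u * ry.right v) * D)
      = ∑ v ∈ ry.index, ∑ u ∈ rx.index,
        S (ry.left v) * (S (rx.left u) * (rx.right u * (ry.right v * D))) := by
        rw [Finset.sum_comm]; simp only [mul_assoc]
    _ = ∑ v ∈ ry.index, S (ry.left v) * (counit (R := k) x • (ry.right v * D)) := by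
        refine Finset.sum_congr rfl fun v _ => ?_
        rw [← Finset.mul_sum, sum_antipode_mul_mul rx]
    _ = counit (R := k) x • ∑ v ∈ ry.index, S (ry.left v) * (ry.right v * D) := by
        rw [Finset.smul_sum]; simp [mul_smul_comm]
    _ = counit (R := k) x • (counit (R := k) y • D) := by
        rw [sum_antipode_mul_mul ry]
    _ = (counit (R := k) x * counit (R := k) y) • D := smul_smul _ _ _

lemma sum4_swap {M : Type*} [AddCommMonoid M] {α γ : Type*} {β : α → Type*}
    {δ : γ → Type*} (s : Finset α) (t : ∀ a, Finset (β a)) (p : Finset γ)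
    (q : ∀ c, Finset (δ c)) (F : ∀ a, β a → ∀ c, δ c → M) :
    ∑ a ∈ s, ∑ b ∈ t a, ∑ c ∈ p, ∑ d ∈ q c, F a b c d
    = ∑ c ∈ p, ∑ d ∈ q c, ∑ a ∈ s, ∑ b ∈ t a, F a b c d := by
  trans ∑ a ∈ s, ∑ c ∈ p, ∑ b ∈ t a, ∑ d ∈ q c, F a b c d
  · exact Finset.sum_congr rfl fun a _ => Finset.sum_comm
  trans ∑ c ∈ p, ∑ a ∈ s, ∑ b ∈ t a, ∑ d ∈ q c, F a b c d
  · exact Finset.sum_comm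
  refine Finset.sum_congr rfl fun c _ => ?_
  trans ∑ a ∈ s, ∑ d ∈ q c, ∑ b ∈ t a, F a b c d
  · exact Finset.sum_congr rfl fun a _ => Finset.sum_comm
  exact Finset.sum_comm

lemma antipode_mul' (a b : H) : S (a * b) = S b * S a := by
  classical
  let ra := ℛ k a; let rb := ℛ k b
  let raL : ∀ i, Repr k (ra.left i) (H × H) := fun i => ℛ k _
  let raR : ∀ i, Repr k (ra.right i) (H × H) := fun i => ℛ k _
  let rbL : ∀ i, Repr k (rb.left i) (H × H) := fun i => ℛ k _
  let rbR : ∀ i, Repr k (rb.right i) (H × H) := fun i => ℛ k _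
  let E : H → H → H → H → H → H → H := fun x₁ x₂ x₃ y₁ y₂ y₃ =>
    (S y₁ * S x₁) * ((x₂ * y₂) * S (x₃ * y₃))
  have step1 : ∀ (c₁ c₂ c₃ : H),
      ∑ j ∈ ra.index, ∑ u ∈ (raL j).index,
        E ((raL j).left u) ((raL j).right u) (ra.right j) c₁ c₂ c₃
      = ∑ j ∈ ra.index, ∑ u ∈ (raR j).index,
        E (ra.left j) ((raR j).left u) ((raR j).right u) c₁ c₂ c₃ := by
    intro c₁ c₂ c₃
    have := tri (mk₃ (LinearMap.mul k H) ((mulLeft k (S c₁)) ∘ₗ S)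
      (mulRight k c₂) (S ∘ₗ (mulRight k c₃))) ra raL raR
    simpa [E] using this
  have step2 : ∀ (d₁ d₂ d₃ : H),
      ∑ l ∈ rb.index, ∑ v ∈ (rbL l).index,
        E d₁ d₂ d₃ ((rbL l).left v) ((rbL l).right v) (rb.right l)
      = ∑ l ∈ rb.index, ∑ v ∈ (rbR l).index,
        E d₁ d₂ d₃ (rb.left l) ((rbR l).left v) ((rbR l).right v) := by
    intro d₁ d₂ d₃
    have := tri (mk₃ (LinearMap.mul k H) ((mulRight k (S d₁)) ∘ₗ S)
      (mulLeft k d₂) (S ∘ₗ (mulLeft k d₃))) rb rbL rbR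
    simpa [E] using this
  -- E III = S (a*b)
  have hIII : ∑ j ∈ ra.index, ∑ l ∈ rb.index, ∑ u ∈ (raL j).index, ∑ v ∈ (rbL l).index,
      E ((raL j).left u) ((raL j).right u) (ra.right j)
        ((rbL l).left v) ((rbL l).right v) (rb.right l)
      = S (a * b) := by
    have hab : S (a * b) = ∑ j ∈ ra.index, ∑ l ∈ rb.index,
        (counit (R := k) (ra.left j) * counit (R := k) (rb.left l)) •
          S (ra.right j * rb.right l) := by
      conv_lhs => rw [← repr_smul_right ra, ← repr_smul_right rb]
      rw [Finset.sum_mul_sum, map_sum]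
      refine Finset.sum_congr rfl fun j _ => ?_
      rw [map_sum]
      refine Finset.sum_congr rfl fun l _ => ?_
      rw [smul_mul_assoc, mul_smul_comm, map_smul, map_smul, smul_smul]
    rw [hab]
    refine Finset.sum_congr rfl fun j _ => Finset.sum_congr rfl fun l _ => ?_
    have := inner3 (raL j) (rbL l) (S (ra.right j * rb.right l))
    refine Eq.trans ?_ this
    refine Finset.sum_congr rfl fun u _ => Finset.sum_congr rfl fun v _ => rfl
  -- E I = S b * S a
  have hI : ∑ j ∈ ra.index, ∑ l ∈ rb.index, ∑ u ∈ (raR j).index, ∑ v ∈ (rbR l).index,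
      E (ra.left j) ((raR j).left u) ((raR j).right u)
        (rb.left l) ((rbR l).left v) ((rbR l).right v)
      = S b * S a := by
    have hba : S b * S a = ∑ j ∈ ra.index, ∑ l ∈ rb.index,
        (counit (R := k) (ra.right j) * counit (R := k) (rb.right l)) •
          (S (rb.left l) * S (ra.left j)) := by
      conv_lhs => rw [← repr_smul_left rb, ← repr_smul_left ra]
      rw [map_sum, map_sum, Finset.sum_mul_sum, Finset.sum_comm]
      refine Finset.sum_congr rfl fun j _ => Finset.sum_congr rfl fun l _ => ?_
      rw [map_smul, map_smul, smul_mul_assoc, mul_smul_comm, smul_smul, mul_comm]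
    rw [hba]
    refine Finset.sum_congr rfl fun j _ => Finset.sum_congr rfl fun l _ => ?_
    exact inner1 (raR j) (rbR l) (S (rb.left l) * S (ra.left j))
  -- chain
  calc S (a * b)
      = ∑ j ∈ ra.index, ∑ l ∈ rb.index, ∑ u ∈ (raL j).index, ∑ v ∈ (rbL l).index,
        E ((raL j).left u) ((raL j).right u) (ra.right j)
          ((rbL l).left v) ((rbL l).right v) (rb.right l) := hIII.symm
    _ = ∑ j ∈ ra.index, ∑ u ∈ (raL j).index, ∑ l ∈ rb.index, ∑ v ∈ (rbL l).index,
        E ((raL j).left u) ((raL j).right u) (ra.right j)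
          ((rbL l).left v) ((rbL l).right v) (rb.right l) := by
        exact Finset.sum_congr rfl fun j _ => Finset.sum_comm
    _ = ∑ j ∈ ra.index, ∑ u ∈ (raL j).index, ∑ l ∈ rb.index, ∑ v ∈ (rbR l).index,
        E ((raL j).left u) ((raL j).right u) (ra.right j)
          (rb.left l) ((rbR l).left v) ((rbR l).right v) := by
        exact Finset.sum_congr rfl fun j _ => Finset.sum_congr rfl fun u _ => step2 _ _ _
    _ = ∑ l ∈ rb.index, ∑ v ∈ (rbR l).index, ∑ j ∈ ra.index, ∑ u ∈ (raL j).index,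
        E ((raL j).left u) ((raL j).right u) (ra.right j)
          (rb.left l) ((rbR l).left v) ((rbR l).right v) := by
        exact sum4_swap _ _ _ _ _
    _ = ∑ l ∈ rb.index, ∑ v ∈ (rbR l).index, ∑ j ∈ ra.index, ∑ u ∈ (raR j).index,
        E (ra.left j) ((raR j).left u) ((raR j).right u)
          (rb.left l) ((rbR l).left v) ((rbR l).right v) := by
        exact Finset.sum_congr rfl fun l _ => Finset.sum_congr rfl fun v _ => step1 _ _ _
    _ = ∑ j ∈ ra.index, ∑ l ∈ rb.index, ∑ u ∈ (raR j).index, ∑ v ∈ (rbR l).index,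
        E (ra.left j) ((raR j).left u) ((raR j).right u)
          (rb.left l) ((rbR l).left v) ((rbR l).right v) := by
        refine Eq.trans (sum4_swap _ _ _ _ _) ?_
        exact Finset.sum_congr rfl fun j _ => Finset.sum_comm
    _ = S b * S a := hI

lemma key_identity (Λ : H) (hint : ∀ x : H, x * Λ = counit (R := k) x • Λ)
    {ι : Type} (r : Repr k Λ ι) (h : H) :
    ∑ i ∈ r.index, r.left i ⊗ₜ[k] (S (r.right i) * h)
    = ∑ i ∈ r.index, (h * r.left i) ⊗ₜ[k] S (r.right i) := by
  classical
  let rh := ℛ k h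
  let rhL : ∀ i, Repr k (rh.left i) (H × H) := fun i => ℛ k _
  let rhR : ∀ i, Repr k (rh.right i) (H × H) := fun i => ℛ k _
  let T : H →ₗ[k] H →ₗ[k] H →ₗ[k] (H ⊗[k] H) :=
    ∑ i ∈ r.index, mk₃ (TensorProduct.mk k H H) (mulRight k (r.left i))
      ((mulLeft k (S (r.right i))) ∘ₗ S) LinearMap.id
  have Tapp : ∀ x y z : H, T x y z
      = ∑ i ∈ r.index, (x * r.left i) ⊗ₜ[k] ((S (r.right i) * S y) * z) := by
    intro x y z
    simp [T, LinearMap.sum_apply, Finset.sum_apply]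
  have tr := tri T rh rhL rhR
  -- evaluate the RHS of tr
  have hRHS : ∑ j ∈ rh.index, ∑ u ∈ (rhR j).index,
      T (rh.left j) ((rhR j).left u) ((rhR j).right u)
      = ∑ i ∈ r.index, (h * r.left i) ⊗ₜ[k] S (r.right i) := by
    calc ∑ j ∈ rh.index, ∑ u ∈ (rhR j).index,
          T (rh.left j) ((rhR j).left u) ((rhR j).right u)
        = ∑ j ∈ rh.index, ∑ i ∈ r.index,
          counit (R := k) (rh.right j) •
            ((rh.left j * r.left i) ⊗ₜ[k] S (r.right i)) := by
          refine Finset.sum_congr rfl fun j _ => ?_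
          simp only [Tapp]
          rw [Finset.sum_comm]
          refine Finset.sum_congr rfl fun i _ => ?_
          rw [← TensorProduct.tmul_sum]
          have h2 : (∑ u ∈ (rhR j).index,
              (S (r.right i) * S ((rhR j).left u)) * (rhR j).right u)
              = counit (R := k) (rh.right j) • S (r.right i) := by
            simp only [mul_assoc, ← Finset.mul_sum]
            rw [HopfAlgebra.sum_antipode_mul_eq_algebraMap_counit (rhR j), mul_algebraMap_eq_smul]
          rw [h2, TensorProduct.tmul_smul]
        _ = ∑ i ∈ r.index, (h * r.left i) ⊗ₜ[k] S (r.right i) := by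
          rw [Finset.sum_comm]
          refine Finset.sum_congr rfl fun i _ => ?_
          calc ∑ j ∈ rh.index, counit (R := k) (rh.right j) •
                ((rh.left j * r.left i) ⊗ₜ[k] S (r.right i))
              = ((∑ j ∈ rh.index, counit (R := k) (rh.right j) • rh.left j)
                  * r.left i) ⊗ₜ[k] S (r.right i) := by
                rw [Finset.sum_mul, TensorProduct.sum_tmul]
                refine Finset.sum_congr rfl fun j _ => ?_
                rw [smul_mul_assoc, TensorProduct.smul_tmul']
            _ = (h * r.left i) ⊗ₜ[k] S (r.right i) := by rw [repr_smul_left rh]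
  -- evaluate the LHS of tr
  have hLHS : ∑ j ∈ rh.index, ∑ u ∈ (rhL j).index,
      T ((rhL j).left u) ((rhL j).right u) (rh.right j)
      = ∑ i ∈ r.index, r.left i ⊗ₜ[k] (S (r.right i) * h) := by
    calc ∑ j ∈ rh.index, ∑ u ∈ (rhL j).index,
          T ((rhL j).left u) ((rhL j).right u) (rh.right j)
        = ∑ j ∈ rh.index, counit (R := k) (rh.left j) •
            ∑ i ∈ r.index, r.left i ⊗ₜ[k] (S (r.right i) * rh.right j) := by
          refine Finset.sum_congr rfl fun j _ => ?_
          simp only [Tapp]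
          simp only [← antipode_mul']
          let Fj : H →ₗ[k] H →ₗ[k] H ⊗[k] H :=
            (TensorProduct.mk k H H).compl₂ ((mulRight k (rh.right j)) ∘ₗ S)
          have e1 : ∑ u ∈ (rhL j).index, ∑ i ∈ r.index,
              ((rhL j).left u * r.left i) ⊗ₜ[k]
                (S ((rhL j).right u * r.right i) * rh.right j)
              = ∑ p ∈ (mulRepr (rhL j) r).index,
                Fj ((mulRepr (rhL j) r).left p) ((mulRepr (rhL j) r).right p) :=
            (Finset.sum_product (rhL j).index r.index
              (fun p => Fj ((mulRepr (rhL j) r).left p)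
                ((mulRepr (rhL j) r).right p))).symm
          rw [e1, repr_sum Fj (mulRepr (rhL j) r)]
          rw [show (rh.left j * Λ) = counit (R := k) (rh.left j) • Λ from hint _]
          rw [map_smul, map_smul, ← repr_sum Fj r]
          rfl
      _ = ∑ i ∈ r.index, r.left i ⊗ₜ[k] (S (r.right i) * h) := by
          simp only [Finset.smul_sum]
          rw [Finset.sum_comm]
          refine Finset.sum_congr rfl fun i _ => ?_
          calc ∑ j ∈ rh.index, counit (R := k) (rh.left j) •
                (r.left i ⊗ₜ[k] (S (r.right i) * rh.right j))
              = ∑ j ∈ rh.index, r.left i ⊗ₜ[k]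
                  (S (r.right i) * (counit (R := k) (rh.left j) • rh.right j)) := by
                refine Finset.sum_congr rfl fun j _ => ?_
                rw [mul_smul_comm, TensorProduct.tmul_smul]
            _ = r.left i ⊗ₜ[k] (S (r.right i) * h) := by
                rw [← TensorProduct.tmul_sum, ← Finset.mul_sum, repr_smul_right rh]
  rw [← hLHS, ← hRHS]
  exact tr


/-- If H is a finite-dimensional Hopf algebra over a field k such that
the trivial H-module k (with action through the counit) is projective, then H is
semisimple. -/
theorem stmt_9 (k H : Type) [Field k] [Ring H] [HopfAlgebra k H] [FiniteDimensional k H]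
    (hproj :
      letI : Module H k := Module.compHom k (Bialgebra.counitAlgHom k H).toRingHom
      Module.Projective H k) :
    IsSemisimpleRing H := by

  classical
  letI : Module H k := Module.compHom k (Bialgebra.counitAlgHom k H).toRingHom
  haveI hp : Module.Projective H k := hproj
  -- the counit as an H-linear map
  let e : H →ₗ[H] k :=
    { toFun := fun x => counit (R := k) x
      map_add' := fun x y => map_add _ x y
      map_smul' := fun h x => by
        show counit (R := k) (h * x) = h • counit (R := k) x
        rw [Bialgebra.counit_mul]; rfl }
  have hesurj : Function.Surjective e := fun c =>
    ⟨algebraMap k H c, by simp [e, Bialgebra.counit_algebraMap]⟩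
  obtain ⟨s, hs⟩ := Module.projective_lifting_property e (LinearMap.id) hesurj
  set Λ : H := s 1 with hΛ
  have hεΛ : counit (R := k) Λ = 1 := by
    have := LinearMap.congr_fun hs 1
    exact this
  have hint : ∀ x : H, x * Λ = counit (R := k) x • Λ := by
    intro x
    have hA : x * Λ = s (counit (R := k) x) := by
      calc x * Λ = x • s 1 := rfl
        _ = s (x • (1 : k)) := (map_smul s x 1).symm
        _ = s (counit (R := k) x) := by
            congr 1
            show counit (R := k) x * 1 = counit (R := k) x
            exact mul_one _
    have hB : counit (R := k) x • Λ = s (counit (R := k) x) := by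
      calc counit (R := k) x • Λ
          = algebraMap k H (counit (R := k) x) * s 1 := Algebra.smul_def _ _
        _ = algebraMap k H (counit (R := k) x) • s 1 := rfl
        _ = s (algebraMap k H (counit (R := k) x) • (1 : k)) := (map_smul s _ 1).symm
        _ = s (counit (R := k) x) := by
            congr 1
            show counit (R := k) (algebraMap k H (counit (R := k) x)) * 1 = _
            rw [Bialgebra.counit_algebraMap, mul_one]
    rw [hA, hB]
  refine (isSemisimpleModule_iff H H).mpr ⟨fun I => ?_⟩
  obtain ⟨J, hJ⟩ := Submodule.exists_isCompl (I.restrictScalars k)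
  let pr := (I.restrictScalars k).linearProjOfIsCompl J hJ
  let π0 : H →ₗ[k] H := (I.restrictScalars k).subtype ∘ₗ pr
  have hπ0mem : ∀ m, π0 m ∈ I := fun m => (pr m).2
  have hπ0id : ∀ m ∈ I, π0 m = m := fun m hm => by
    show ((pr m : H)) = m
    exact congrArg Subtype.val (Submodule.linearProjOfIsCompl_apply_left hJ ⟨m, hm⟩)
  let r := ℛ k Λ
  let P : H → H := fun m => ∑ i ∈ r.index, r.left i * π0 (HopfAlgebra.antipode (R := k) (r.right i) * m)
  have hPmem : ∀ m, P m ∈ I := fun m => Submodule.sum_mem _ fun i _ =>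
    I.smul_mem (r.left i) (hπ0mem (HopfAlgebra.antipode (R := k) (r.right i) * m))
  have hPid : ∀ m ∈ I, P m = m := by
    intro m hm
    have h1 : ∀ i ∈ r.index, r.left i * π0 (HopfAlgebra.antipode (R := k) (r.right i) * m)
        = r.left i * (HopfAlgebra.antipode (R := k) (r.right i) * m) := fun i _ => by
      have hmem : HopfAlgebra.antipode (R := k) (r.right i) * m ∈ I :=
        I.smul_mem (HopfAlgebra.antipode (R := k) (r.right i)) hm
      rw [hπ0id _ hmem]
    calc P m = ∑ i ∈ r.index, r.left i * (HopfAlgebra.antipode (R := k) (r.right i) * m) :=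
          Finset.sum_congr rfl h1
      _ = (∑ i ∈ r.index, r.left i * HopfAlgebra.antipode (R := k) (r.right i)) * m := by
          rw [Finset.sum_mul]; simp [mul_assoc]
      _ = m := by
          rw [HopfAlgebra.sum_mul_antipode_eq_smul r, hεΛ, one_smul, one_mul]
  have hPlin : ∀ (h m : H), P (h * m) = h * P m := by
    intro h m
    have hkey := key_identity Λ hint r h
    apply_fun TensorProduct.lift ((LinearMap.mul k H).compl₂ (π0 ∘ₗ mulRight k m)) at hkey
    simp only [map_sum, TensorProduct.lift.tmul, LinearMap.compl₂_apply,
      LinearMap.mul_apply', LinearMap.comp_apply, LinearMap.mulRight_apply] at hkey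
    simp only [mul_assoc] at hkey
    calc P (h * m) = ∑ i ∈ r.index, r.left i * π0 (HopfAlgebra.antipode (R := k) (r.right i) * (h * m)) := rfl
      _ = ∑ i ∈ r.index, h * (r.left i * π0 (HopfAlgebra.antipode (R := k) (r.right i) * m)) := hkey
      _ = h * P m := by rw [← Finset.mul_sum]
  let Pl : H →ₗ[H] H :=
    { toFun := P
      map_add' := fun m m' => by
        show P (m + m') = P m + P m'
        simp only [P, mul_add, map_add, ← Finset.sum_add_distrib]
      map_smul' := fun h m => hPlin h m }
  let Pc : H →ₗ[H] I := Pl.codRestrict I hPmem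
  have hPc : ∀ x : I, Pc x = x := fun x => Subtype.ext (hPid x x.2)
  exact ⟨LinearMap.ker Pc, LinearMap.isCompl_of_proj hPc⟩
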